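/- Acyclicity of the free monogenic LD-algebra: in F₁ = T₁/≡_LD, the relation <_L has no cycle; equivalently, for every term t ∈ T₁ and every nonempty sequence of terms u₁,…,uₙ ∈ T₁ (n ≥ 1), the term (…((t·u₁)·u₂)…)·uₙ is not ≡_LD-equivalent to t. -/

import Mathlib

open Monoid Monoid.CoprodI Monoid.CoprodI.Word


/-- The smallest magma congruence on the free magma (set of terms) `T_X`
containing all pairs `(t₁·(t₂·t₃), (t₁·t₂)·(t₁·t₃))`. -/
inductive LDRel (X : Type*) : FreeMagma X → FreeMagma X → Prop
  | ld (a b c : FreeMagma X) : LDRel X (a * (b * c)) ((a * b) * (a * c))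
  | refl (a : FreeMagma X) : LDRel X a a
  | symm {a b : FreeMagma X} : LDRel X a b → LDRel X b a
  | trans {a b c : FreeMagma X} : LDRel X a b → LDRel X b c → LDRel X a c
  | mul {a b c d : FreeMagma X} : LDRel X a b → LDRel X c d → LDRel X (a * c) (b * d)

def LDSetoid (X : Type*) : Setoid (FreeMagma X) :=
  ⟨LDRel X, ⟨LDRel.refl, LDRel.symm, LDRel.trans⟩⟩

/-- The free LD-algebra `F_X = T_X/≡_LD`. -/
def FreeLD (X : Type*) := Quotient (LDSetoid X)

instance (X : Type*) : Mul (FreeLD X) :=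
  ⟨Quotient.map₂ (· * ·) fun _ _ h _ _ h' => LDRel.mul h h'⟩

/-- The `≡_LD`-class of the variable `x`. -/
def FreeLD.of {X : Type*} (x : X) : FreeLD X :=
  Quotient.mk (LDSetoid X) (FreeMagma.of x)

/-- `leftIter(a; u₁,…,uₙ) = (…((a·u₁)·u₂)…)·uₙ` (equal to `a` for the empty list). -/
def leftIter {S : Type*} [Mul S] (a : S) (l : List S) : S :=
  l.foldl (· * ·) a

/-- Left division: `a <_L b` iff `b = (…((a·u₁)·u₂)…)·uₙ` for some `n ≥ 1`
and `u₁,…,uₙ ∈ S`. -/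
def ltL {S : Type*} [Mul S] (a b : S) : Prop :=
  ∃ l : List S, l ≠ [] ∧ b = leftIter a l

/-- Acyclicity of the free monogenic LD-algebra: in
`F₁ = T₁/≡_LD` the relation `<_L` has no cycle; equivalently, for every term
`t ∈ T₁` and every nonempty sequence of terms `u₁,…,uₙ ∈ T₁`, the term
`(…((t·u₁)·u₂)…)·uₙ` is not `≡_LD`-equivalent to `t`. -/
abbrev Mi : ℕ → Type := fun _ => FreeGroup Unit
abbrev FF : Type := CoprodI Mi

namespace Larue

noncomputable section
open scoped Classical

def xof (i : ℕ) (m : FreeGroup Unit) : FF := @CoprodI.of ℕ Mi _ i m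

/-- generator x_i -/
def x (i : ℕ) : FF := xof i (FreeGroup.of ())

lemma xof_hom (i : ℕ) (m m' : FreeGroup Unit) : xof i (m * m') = xof i m * xof i m' := by
  simp [xof]

/-- the word of g -/
def W (g : FF) : Word Mi := Word.equiv g

def fI (g : FF) : Option ℕ := (W g).fstIdx

def len (g : FF) : ℕ := (W g).toList.length

lemma equiv_apply (a : FF) : Word.equiv a = a • Word.empty := rfl

lemma equiv_mul (a b : FF) : W (a * b) = a • W b := by
  rw [W, W, equiv_apply, equiv_apply, mul_smul]

lemma W_one : W (1 : FF) = Word.empty := by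
  rw [W, equiv_apply, one_smul]

lemma fI_one : fI (1 : FF) = none := by
  rw [fI, W_one]; rfl

lemma equiv_of_mul {i : ℕ} (m : FreeGroup Unit) (h : FF) (hm : m ≠ 1)
    (hh : fI h ≠ some i) :
    W ((xof i m) * h) = @Word.cons ℕ Mi _ i m (W h) hh hm := by
  rw [equiv_mul]; exact cons_eq_smul.symm

lemma fI_of_mul {i : ℕ} (m : FreeGroup Unit) (h : FF) (hm : m ≠ 1)
    (hh : fI h ≠ some i) : fI ((xof i m) * h) = some i := by
  rw [fI, equiv_of_mul m h hm hh]; exact fstIdx_cons _ _ _ _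

lemma len_of_mul {i : ℕ} (m : FreeGroup Unit) (h : FF) (hm : m ≠ 1)
    (hh : fI h ≠ some i) : len ((xof i m) * h) = len h + 1 := by
  rw [len, equiv_of_mul m h hm hh]
  simp [Word.cons, len, W]

lemma prod_W (g : FF) : Word.prod (W g) = g :=
  (Word.equiv (M := Mi)).symm_apply_apply g

lemma W_prod (w : Word Mi) : W (Word.prod w) = w :=
  (Word.equiv (M := Mi)).apply_symm_apply w

lemma decomp (g : FF) (hg : g ≠ 1) :
    ∃ (i : ℕ) (m : FreeGroup Unit) (h : FF), m ≠ 1 ∧ fI h ≠ some i ∧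
      g = (xof i m) * h ∧ fI g = some i ∧ len h + 1 = len g := by
  have hgW : g = Word.prod (W g) := (prod_W g).symm
  rcases hw : W g with ⟨l, hl1, hl2⟩
  match l, hl1, hl2 with
  | [], hl1, hl2 =>
      exfalso; apply hg
      rw [hgW, hw]; simp [Word.prod]
  | a :: rest, hl1, hl2 =>
      have hrest1 : ∀ l' ∈ rest, l'.snd ≠ 1 := fun l' hl' => hl1 l' (List.mem_cons_of_mem _ hl')
      have hrest2 : List.Chain' (fun l l' : (Σ i, Mi i) => l.fst ≠ l'.fst) rest := hl2.tail
      set wr : Word Mi := ⟨rest, hrest1, hrest2⟩ with hwr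
      refine ⟨a.1, a.2, Word.prod wr, hl1 a List.mem_cons_self, ?_, ?_, ?_, ?_⟩
      · rw [fI, W_prod]
        show wr.fstIdx ≠ some a.1
        rcases rest with _ | ⟨b, rest'⟩
        · simp [Word.fstIdx, hwr]
        · have := (List.isChain_cons_cons.mp hl2).1
          simp [Word.fstIdx, hwr]
          exact fun h => this h.symm
      · rw [hgW, hw]
        show Word.prod ⟨a :: rest, hl1, hl2⟩ = xof a.1 a.2 * Word.prod wr
        simp [Word.prod, xof, hwr]
      · rw [fI, hw]; rfl
      · rw [len, W_prod, len, hw]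
        simp [hwr]


def ofH (j : ℕ) : Mi j →* FF := @CoprodI.of ℕ Mi _ j

def conjH (i j : ℕ) : FreeGroup Unit →* FF :=
  (MulAut.conj (x i)).toMonoidHom.comp (ofH j)

def conjInvH (i j : ℕ) : FreeGroup Unit →* FF :=
  (MulAut.conj (x i)⁻¹).toMonoidHom.comp (ofH j)

def Aend (i : ℕ) : FF →* FF :=
  CoprodI.lift (fun j => if j = i then conjH i (i+1) else if j = i+1 then ofH i else ofH j)

def Bend (i : ℕ) : FF →* FF :=
  CoprodI.lift (fun j => if j = i then ofH (i+1) else if j = i+1 then conjInvH (i+1) i else ofH j)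

lemma Aend_xof (i j : ℕ) (m : FreeGroup Unit) :
    Aend i (xof j m) = if j = i then x i * xof (i+1) m * (x i)⁻¹
      else if j = i+1 then xof i m else xof j m := by
  have : Aend i (xof j m) = (fun k => if k = i then conjH i (i+1) else if k = i+1 then ofH i else ofH j) j m := by
    exact CoprodI.lift_of ..
  rw [this]
  by_cases h1 : j = i
  · subst h1; simp [conjH, ofH, xof, MulAut.conj]
  · by_cases h2 : j = i + 1
    · subst h2; simp [h1, ofH, xof]
    · simp [h1, h2, ofH, xof]

lemma Bend_xof (i j : ℕ) (m : FreeGroup Unit) :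
    Bend i (xof j m) = if j = i then xof (i+1) m
      else if j = i+1 then (x (i+1))⁻¹ * xof i m * (x (i+1)) else xof j m := by
  have : Bend i (xof j m) = (fun k => if k = i then ofH (i+1) else if k = i+1 then conjInvH (i+1) i else ofH j) j m := by
    exact CoprodI.lift_of ..
  rw [this]
  by_cases h1 : j = i
  · subst h1; simp [ofH, xof]
  · by_cases h2 : j = i + 1
    · subst h2; simp [h1, conjInvH, ofH, xof, MulAut.conj]
    · simp [h1, h2, ofH, xof]

lemma hom_ext {G : Type*} [Group G] {f g : FF →* G}
    (h : ∀ j m, f (xof j m) = g (xof j m)) : f = g := by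
  apply CoprodI.ext_hom
  intro j
  apply FreeGroup.ext_hom
  intro a
  cases a
  exact h j (FreeGroup.of ())

lemma xof_eq_one_iff {j : ℕ} {m : FreeGroup Unit} : xof j m = 1 ↔ m = 1 := by
  constructor
  · intro h
    have := CoprodI.of_injective (M := Mi) j (by simpa [xof] using h : (CoprodI.of m : FF) = CoprodI.of (1 : Mi j))
    simpa using this
  · rintro rfl; simp [xof]

lemma AB (i : ℕ) : (Aend i).comp (Bend i) = MonoidHom.id FF := by
  apply hom_ext
  intro j m
  simp only [MonoidHom.comp_apply, MonoidHom.id_apply, Bend_xof]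
  split_ifs with h1 h2
  · subst h1; rw [Aend_xof]; simp
  · subst h2
    have e1 : ¬ (i + 1 = i) := by omega
    simp only [map_mul, map_inv, Aend_xof, x, e1, if_false, if_neg, if_pos, if_true, ite_true, ite_false, eq_self_iff_true]
    group
  · rw [Aend_xof]
    simp [h1, h2]

lemma BA (i : ℕ) : (Bend i).comp (Aend i) = MonoidHom.id FF := by
  apply hom_ext
  intro j m
  simp only [MonoidHom.comp_apply, MonoidHom.id_apply, Aend_xof]
  split_ifs with h1 h2
  · subst h1
    have e1 : ¬ (j + 1 = j) := by omega
    simp only [map_mul, map_inv, Bend_xof, x, e1, if_false, ite_false, ite_true, eq_self_iff_true]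
    group
  · subst h2
    rw [Bend_xof]
    have e1 : ¬ (i + 1 = i) := by omega
    simp [e1]
  · rw [Bend_xof]; simp [h1, h2]

/-- Artin automorphism σ_i -/
def Artin (i : ℕ) : MulAut FF :=
  MonoidHom.toMulEquiv (Aend i) (Bend i) (BA i) (AB i)

lemma aut_ext {e e' : MulAut FF} (h : ∀ j m, e (xof j m) = e' (xof j m)) : e = e' := by
  apply MulEquiv.toMonoidHom_injective
  exact hom_ext h

lemma Artin_apply (i : ℕ) (g : FF) : Artin i g = Aend i g := rfl

lemma Artin_xof (i j : ℕ) (m : FreeGroup Unit) :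
    Artin i (xof j m) = if j = i then x i * xof (i+1) m * (x i)⁻¹
      else if j = i+1 then xof i m else xof j m := Aend_xof i j m

lemma artin_comm (i j : ℕ) (hij : i + 2 ≤ j) :
    Artin i * Artin j = Artin j * Artin i := by
  apply aut_ext
  intro k m
  have f1 : ¬ (j = i) := by omega
  have f2 : ¬ (j = i + 1) := by omega
  have f3 : ¬ (i = j) := by omega
  have f4 : ¬ (i = j + 1) := by omega
  have f5 : ¬ (i + 1 = j) := by omega
  have f6 : ¬ (i + 1 = j + 1) := by omega
  have f7 : ¬ (j + 1 = i) := by omega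
  have f8 : ¬ (j + 1 = i + 1) := by omega
  show Artin i (Artin j (xof k m)) = Artin j (Artin i (xof k m))
  by_cases h1 : k = i
  · subst h1
    simp [Artin_xof, map_mul, map_inv, x, f1, f2, f3, f4, f5, f6, f7, f8]
  · by_cases h2 : k = i + 1
    · subst h2
      simp [Artin_xof, map_mul, map_inv, x, f1, f2, f3, f4, f5, f6, f7, f8]
    · by_cases h3 : k = j
      · subst h3
        simp [Artin_xof, map_mul, map_inv, x, f1, f2, f3, f4, f5, f6, f7, f8]
      · by_cases h4 : k = j + 1
        · subst h4
          simp [Artin_xof, map_mul, map_inv, x, f1, f2, f3, f4, f5, f6, f7, f8]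
        · simp [Artin_xof, map_mul, map_inv, x, h1, h2, h3, h4]

lemma artin_braid (i : ℕ) :
    Artin i * Artin (i+1) * Artin i = Artin (i+1) * Artin i * Artin (i+1) := by
  apply aut_ext
  intro k m
  have f1 : ¬ (i = i + 1) := by omega
  have f2 : ¬ (i + 1 = i) := by omega
  have f3 : ¬ (i = i + 1 + 1) := by omega
  have f4 : ¬ (i + 1 + 1 = i) := by omega
  have f5 : ¬ (i + 1 + 1 = i + 1) := by omega
  have f6 : ¬ (i + 2 = i) := by omega
  have f7 : ¬ (i + 2 = i + 1) := by omega
  show Artin i (Artin (i+1) (Artin i (xof k m))) = Artin (i+1) (Artin i (Artin (i+1) (xof k m)))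
  by_cases h1 : k = i
  · subst h1
    simp only [Artin_xof, map_mul, map_inv, x, if_pos, f1, f2, f3, f4, f5, f6, f7,
      eq_self_iff_true, if_true, ite_true, ite_false, if_false]
    group
  · by_cases h2 : k = i + 1
    · subst h2
      simp only [Artin_xof, map_mul, map_inv, x, f1, f2, f3, f4, f5, f6, f7,
        eq_self_iff_true, ite_true, ite_false, if_false]
    · by_cases h3 : k = i + 2
      · subst h3
        simp only [Artin_xof, map_mul, map_inv, x, f1, f2, f3, f4, f5, f6, f7,
          eq_self_iff_true, ite_true, ite_false, if_false]
      · have g1 : ¬ (k = i + 1 + 1) := by omega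
        simp [Artin_xof, map_mul, map_inv, x, h1, h2, h3, g1]

/-! ### The braid group B∞ as a presented group -/

def braidRels : Set (FreeGroup ℕ) :=
  {r | ∃ i j : ℕ, i + 2 ≤ j ∧
      r = .of i * .of j * (.of i)⁻¹ * (.of j)⁻¹} ∪
  {r | ∃ i : ℕ, r = .of i * .of (i+1) * .of i * ((.of (i+1)) * .of i * .of (i+1))⁻¹}

abbrev BG : Type := PresentedGroup braidRels

def σ (i : ℕ) : BG := PresentedGroup.of i

/-- check relations for a candidate family -/
lemma rels_check {G : Type*} [Group G] (f : ℕ → G)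
    (hcomm : ∀ i j, i + 2 ≤ j → f i * f j = f j * f i)
    (hbraid : ∀ i, f i * f (i+1) * f i = f (i+1) * f i * f (i+1)) :
    ∀ r ∈ braidRels, FreeGroup.lift f r = 1 := by
  rintro r (⟨i, j, hij, rfl⟩ | ⟨i, rfl⟩)
  · simp only [map_mul, map_inv, FreeGroup.lift_apply_of]
    rw [hcomm i j hij]
    group
  · simp only [map_mul, map_inv, FreeGroup.lift_apply_of]
    rw [hbraid i]
    group

lemma mk_rel_one {r : FreeGroup ℕ} (hr : r ∈ braidRels) :
    PresentedGroup.mk braidRels r = 1 := by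
  have : r ∈ Subgroup.normalClosure braidRels := Subgroup.subset_normalClosure hr
  exact (QuotientGroup.eq_one_iff r).mpr this

lemma σ_comm {i j : ℕ} (hij : i + 2 ≤ j) : σ i * σ j = σ j * σ i := by
  have h := mk_rel_one (Or.inl ⟨i, j, hij, rfl⟩)
  simp only [map_mul, map_inv] at h
  rw [mul_inv_eq_one] at h
  rw [mul_inv_eq_iff_eq_mul] at h
  exact h

lemma σ_braid (i : ℕ) : σ i * σ (i+1) * σ i = σ (i+1) * σ i * σ (i+1) := by
  have h := mk_rel_one (Or.inr ⟨i, rfl⟩)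
  simp only [map_mul, map_inv] at h
  rw [mul_inv_eq_one] at h
  exact h

/-- the shift endomorphism of B∞ -/
def sh : BG →* BG :=
  PresentedGroup.toGroup (f := fun i => σ (i+1)) <| rels_check _
    (fun i j hij => σ_comm (by omega))
    (fun i => σ_braid (i+1))

@[simp] lemma sh_σ (i : ℕ) : sh (σ i) = σ (i+1) :=
  PresentedGroup.toGroup.of _

/-- The Artin action of the braid group on FF -/
def ρ : BG →* MulAut FF :=
  PresentedGroup.toGroup (f := Artin) (rels_check Artin artin_comm artin_braid)

@[simp] lemma ρ_σ (i : ℕ) : ρ (σ i) = Artin i :=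
  PresentedGroup.toGroup.of _

/-- σ 0 commutes with every double shift -/
lemma commZ0 (g : BG) : σ 0 * sh (sh g) = sh (sh g) * σ 0 := by
  have : g ∈ (Subgroup.centralizer {σ 0}).comap (sh.comp sh) := by
    apply PresentedGroup.generated_by
    intro j
    simp only [Subgroup.mem_comap, MonoidHom.comp_apply]
    rw [show (PresentedGroup.of j : BG) = σ j from rfl, sh_σ, sh_σ]
    rw [Subgroup.mem_centralizer_iff]
    rintro y ⟨rfl⟩
    exact σ_comm (i := 0) (j := j+2) (by omega)
  rw [Subgroup.mem_comap, Subgroup.mem_centralizer_iff] at this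
  have h2 := this (σ 0) rfl
  simpa [MonoidHom.comp_apply] using h2

lemma commZ (g : BG) (t : BG) : σ 0 * (sh (sh g) * t) = sh (sh g) * (σ 0 * t) := by
  rw [← mul_assoc, commZ0, mul_assoc]

lemma commZinv (g : BG) (t : BG) : σ 0 * ((sh (sh g))⁻¹ * t) = (sh (sh g))⁻¹ * (σ 0 * t) := by
  have := commZ g⁻¹ t
  rw [map_inv, map_inv] at this
  exact this

lemma braidc (t : BG) :
    σ 0 * (sh (σ 0) * (σ 0 * ((sh (σ 0))⁻¹ * t))) = sh (σ 0) * (σ 0 * t) := by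
  have hb : σ 0 * sh (σ 0) * σ 0 * (sh (σ 0))⁻¹ = sh (σ 0) * σ 0 := by
    rw [mul_inv_eq_iff_eq_mul, sh_σ]
    exact σ_braid 0
  calc σ 0 * (sh (σ 0) * (σ 0 * ((sh (σ 0))⁻¹ * t)))
      = (σ 0 * sh (σ 0) * σ 0 * (sh (σ 0))⁻¹) * t := by simp [mul_assoc]
    _ = (sh (σ 0) * σ 0) * t := by rw [hb]
    _ = sh (σ 0) * (σ 0 * t) := by rw [mul_assoc]

/-- The left-distributive operation on BG -/
def op (a b : BG) : BG := a * sh b * σ 0 * (sh a)⁻¹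

lemma ld_law (a b c : BG) : op a (op b c) = op (op a b) (op a c) := by
  unfold op
  simp only [map_mul, map_inv, mul_inv_rev, inv_inv, mul_assoc, inv_mul_cancel_left]
  rw [commZ a, inv_mul_cancel_left, commZ c, braidc, commZinv b]

/-! ### head-syllable analysis -/

def gn : FreeGroup Unit := FreeGroup.of ()

lemma gn_ne_one : gn ≠ 1 := FreeGroup.of_ne_one ()

lemma x_eq (i : ℕ) : x i = xof i gn := rfl

lemma xof_inv (i : ℕ) (m : FreeGroup Unit) : (xof i m)⁻¹ = xof i m⁻¹ := by
  simp [xof]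

lemma xof_mul_cancel (i : ℕ) (m m' : FreeGroup Unit) (h : FF) :
    xof i m * (xof i m' * h) = xof i (m * m') * h := by
  rw [xof_hom, mul_assoc]

lemma xof_one (i : ℕ) : xof i (1 : FreeGroup Unit) = 1 := by simp [xof]

lemma fI_xof {i : ℕ} {m : FreeGroup Unit} (hm : m ≠ 1) : fI (xof i m) = some i := by
  have h := fI_of_mul (i := i) m 1 hm (by rw [fI_one]; simp)
  rwa [mul_one] at h

lemma len_zero_eq_one {g : FF} (h : len g = 0) : g = 1 := by
  by_contra hg
  obtain ⟨i, m, h', hm, hfh, rfl, hfg, hlen⟩ := decomp g hg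
  omega

lemma A0_0 (m : FreeGroup Unit) : Artin 0 (xof 0 m) = x 0 * xof 1 m * (x 0)⁻¹ := by
  rw [Artin_xof]; simp

lemma A0_1 (m : FreeGroup Unit) : Artin 0 (xof 1 m) = xof 0 m := by
  rw [Artin_xof]; simp

lemma A0_k {k : ℕ} (hk0 : k ≠ 0) (hk1 : k ≠ 1) (m : FreeGroup Unit) :
    Artin 0 (xof k m) = xof k m := by
  rw [Artin_xof]; simp [hk0, hk1]

lemma xof_mul_cancel2 (i : ℕ) (m m' : FreeGroup Unit) :
    xof i m * xof i m' = xof i (m * m') := by rw [xof_hom]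

lemma sigma_main : ∀ n : ℕ, ∀ g : FF, len g ≤ n →
    ((fI g = some 0 → ∃ r, fI r = some 1 ∧ Artin 0 g = x 0 * r) ∧
     (fI g ≠ some 0 → fI ((x 0)⁻¹ * Artin 0 g) ≠ some 1) ∧
     (∀ j, j ≠ 0 → fI g ≠ some j → fI (Artin 0 g) ≠ some j) ∧
     (∀ k, k ≠ 0 → k ≠ 1 → fI g = some k → fI (Artin 0 g) = some k)) := by
  have base : ∀ g : FF, g = 1 →
    ((fI g = some 0 → ∃ r, fI r = some 1 ∧ Artin 0 g = x 0 * r) ∧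
     (fI g ≠ some 0 → fI ((x 0)⁻¹ * Artin 0 g) ≠ some 1) ∧
     (∀ j, j ≠ 0 → fI g ≠ some j → fI (Artin 0 g) ≠ some j) ∧
     (∀ k, k ≠ 0 → k ≠ 1 → fI g = some k → fI (Artin 0 g) = some k)) := by
    rintro g rfl
    refine ⟨?_, ?_, ?_, ?_⟩
    · intro h; rw [fI_one] at h; exact absurd h (by simp)
    · intro _
      have : ((x 0)⁻¹ : FF) = xof 0 gn⁻¹ := by rw [x_eq, xof_inv]
      rw [map_one, mul_one, this, fI_xof (inv_ne_one.mpr gn_ne_one)]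
      simp
    · intro j hj _; rw [map_one, fI_one]; simp
    · intro k _ _ h; rw [fI_one] at h; exact absurd h (by simp)
  intro n
  induction n with
  | zero =>
      intro g hg
      exact base g (len_zero_eq_one (Nat.le_zero.mp hg))
  | succ n ih =>
      intro g hg
      by_cases hg1 : g = 1
      · exact base g hg1
      obtain ⟨i, m, h, hm, hfh, rfl, hfg, hlen⟩ := decomp _ hg1
      have hlh : len h ≤ n := by omega
      obtain ⟨ih2, ih3, ih4, ih5⟩ := ih h hlh
      constructor
      · -- S2 : head 0
        intro h0
        rw [hfg] at h0
        have hi : i = 0 := by simpa using h0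
        subst hi
        have hs := ih3 hfh
        refine ⟨xof 1 m * ((x 0)⁻¹ * Artin 0 h), fI_of_mul m _ hm hs, ?_⟩
        rw [map_mul, A0_0]
        group
      constructor
      · -- S3 : head not 0
        intro h0
        rw [hfg] at h0
        have hi : i ≠ 0 := fun hh => h0 (by rw [hh])
        by_cases hi1 : i = 1
        · subst hi1
          rw [map_mul, A0_1]
          by_cases hh1 : h = 1
          · subst hh1
            have e1 : (x 0)⁻¹ * (xof 0 m * Artin 0 1) = xof 0 (gn⁻¹ * m) := by
              rw [map_one, mul_one, x_eq, xof_inv, xof_mul_cancel2]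
            rw [e1]
            by_cases hv : gn⁻¹ * m = 1
            · rw [hv, xof_one, fI_one]; simp
            · rw [fI_xof hv]; simp
          · obtain ⟨i', m', h', hm', hfh', hde', hfg', hlen'⟩ := decomp _ hh1
            by_cases hi'0 : i' = 0
            · subst hi'0
              obtain ⟨r, hr1, hr2⟩ := ih2 hfg'
              have e1 : (x 0)⁻¹ * (xof 0 m * Artin 0 h)
                  = xof 0 (gn⁻¹ * m * gn) * r := by
                rw [hr2, x_eq, xof_inv, xof_mul_cancel, xof_mul_cancel, mul_assoc]
              rw [e1]
              have hv : gn⁻¹ * m * gn ≠ 1 := by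
                intro hc
                apply hm
                have : m = gn * 1 * gn⁻¹ := by rw [← hc]; group
                simpa using this
              rw [fI_of_mul _ _ hv (by rw [hr1]; simp)]
              simp
            · have hi'1 : i' ≠ 1 := by
                intro hc; apply hfh; rw [hfg', hc]
              have hAk : fI (Artin 0 h) = some i' := ih5 i' hi'0 hi'1 hfg'
              have e1 : (x 0)⁻¹ * (xof 0 m * Artin 0 h)
                  = xof 0 (gn⁻¹ * m) * Artin 0 h := by
                rw [x_eq, xof_inv, xof_mul_cancel]
              rw [e1]
              by_cases hv : gn⁻¹ * m = 1
              · rw [hv, xof_one, one_mul, hAk]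
                simp [hi'1]
              · rw [fI_of_mul _ _ hv (by rw [hAk]; simp [hi'0])]
                simp
        · -- i ∉ {0, 1}
          rw [map_mul, A0_k hi hi1]
          have hAk : fI (Artin 0 h) ≠ some i := ih4 i hi hfh
          have h1 : fI (xof i m * Artin 0 h) = some i := fI_of_mul _ _ hm hAk
          have h2 : fI ((x 0)⁻¹ * (xof i m * Artin 0 h)) = some 0 := by
            have e1 : ((x 0)⁻¹ : FF) = xof 0 gn⁻¹ := by rw [x_eq, xof_inv]
            rw [e1]
            exact fI_of_mul _ _ (inv_ne_one.mpr gn_ne_one) (by rw [h1]; simp [hi])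
          rw [h2]; simp
      constructor
      · -- S4
        intro j hj hgj
        rw [hfg] at hgj
        have hij : i ≠ j := fun hc => hgj (by rw [hc])
        by_cases hi0 : i = 0
        · subst hi0
          have hs := ih3 hfh
          have e0 : Artin 0 (xof 0 m * h) = x 0 * (xof 1 m * ((x 0)⁻¹ * Artin 0 h)) := by
            rw [map_mul, A0_0]; group
          have h1 : fI (xof 1 m * ((x 0)⁻¹ * Artin 0 h)) = some 1 := fI_of_mul _ _ hm hs
          have h2 : fI (x 0 * (xof 1 m * ((x 0)⁻¹ * Artin 0 h))) = some 0 :=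
            fI_of_mul _ _ gn_ne_one (by rw [h1]; simp)
          rw [e0, h2]
          simp [Ne.symm hj]
        · by_cases hi1 : i = 1
          · subst hi1
            rw [map_mul, A0_1]
            by_cases hh1 : h = 1
            · subst hh1
              rw [map_one, mul_one, fI_xof hm]
              simp [Ne.symm hj]
            · obtain ⟨i', m', h', hm', hfh', hde', hfg', hlen'⟩ := decomp _ hh1
              by_cases hi'0 : i' = 0
              · subst hi'0
                obtain ⟨r, hr1, hr2⟩ := ih2 hfg'
                have e1 : xof 0 m * Artin 0 h = xof 0 (m * gn) * r := by
                  rw [hr2, x_eq, xof_mul_cancel]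
                rw [e1]
                by_cases hv : m * gn = 1
                · rw [hv, xof_one, one_mul, hr1]
                  intro hc
                  exact hij (by simpa using hc)
                · rw [fI_of_mul _ _ hv (by rw [hr1]; simp)]
                  simp [Ne.symm hj]
              · have hi'1 : i' ≠ 1 := by
                  intro hc; apply hfh; rw [hfg', hc]
                have hAk : fI (Artin 0 h) = some i' := ih5 i' hi'0 hi'1 hfg'
                rw [fI_of_mul _ _ hm (by rw [hAk]; simp [hi'0])]
                simp [Ne.symm hj]
          · rw [map_mul, A0_k hi0 hi1]
            have hAk : fI (Artin 0 h) ≠ some i := ih4 i hi0 hfh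
            rw [fI_of_mul _ _ hm hAk]
            simp [hij]
      · -- S5
        intro k hk0 hk1 hgk
        rw [hfg] at hgk
        have hik : i = k := by simpa using hgk
        subst hik
        rw [map_mul, A0_k hk0 hk1]
        have hAk : fI (Artin 0 h) ≠ some i := ih4 i hk0 hfh
        rw [fI_of_mul _ _ hm hAk]

/-! ### x₀-free elements and shifted automorphisms -/

def AllP (g : FF) : Prop := ∀ p ∈ (W g).toList, p.1 ≠ 0

lemma allP_one : AllP 1 := by
  intro p hp
  rw [W_one] at hp
  simp [Word.empty] at hp

lemma len_one : len (1 : FF) = 0 := by rw [len, W_one]; rfl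

lemma toList_of_mul {i : ℕ} (m : FreeGroup Unit) (h : FF) (hm : m ≠ 1)
    (hh : fI h ≠ some i) :
    (W ((xof i m) * h)).toList = ⟨i, m⟩ :: (W h).toList := by
  rw [equiv_of_mul m h hm hh]
  rfl

lemma allP_xof {j : ℕ} (hj : j ≠ 0) (m : FreeGroup Unit) : AllP (xof j m) := by
  by_cases hm : m = 1
  · subst hm; rw [xof_one]; exact allP_one
  · intro p hp
    have e := toList_of_mul (i := j) m 1 hm (by rw [fI_one]; simp)
    rw [mul_one, W_one] at e
    rw [e] at hp
    simp only [Word.empty, List.mem_cons] at hp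
    rcases hp with hp | hp
    · subst hp; exact hj
    · simp at hp

lemma allP_head_ne {g : FF} {j : ℕ} (hP : AllP g) (hfg : fI g = some j) : j ≠ 0 := by
  rcases hl : (W g).toList with _ | ⟨a, l⟩
  · rw [fI, Word.fstIdx, hl] at hfg; simp at hfg
  · rw [fI, Word.fstIdx, hl] at hfg
    simp only [List.head?] at hfg
    have : a.1 = j := by simpa using hfg
    rw [← this]
    exact hP a (by rw [hl]; simp)

lemma allP_sub {i : ℕ} {m : FreeGroup Unit} {h : FF} (hm : m ≠ 1)
    (hh : fI h ≠ some i) (hP : AllP (xof i m * h)) : AllP h := by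
  intro p hp
  exact hP p (by rw [toList_of_mul m h hm hh]; simp [hp])

lemma allP_smul {j : ℕ} (hj : j ≠ 0) (m : FreeGroup Unit) {y : FF} (hy : AllP y) :
    AllP (xof j m * y) := by
  intro p hp
  rw [equiv_mul] at hp
  rcases p with ⟨i, m₁⟩
  rw [show (xof j m : FF) • W y = @CoprodI.of ℕ Mi _ j m • W y from rfl] at hp
  rw [Word.mem_smul_iff] at hp
  rcases hp with ⟨hij, hp⟩ | ⟨hm₁, hij, _⟩
  · exact hy _ hp
  · subst hij; exact hj

lemma allP_mul : ∀ n : ℕ, ∀ a y : FF, len a ≤ n → AllP a → AllP y → AllP (a * y) := by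
  intro n
  induction n with
  | zero =>
      intro a y ha hPa hPy
      rw [len_zero_eq_one (Nat.le_zero.mp ha), one_mul]
      exact hPy
  | succ n ih =>
      intro a y ha hPa hPy
      by_cases ha1 : a = 1
      · rw [ha1, one_mul]; exact hPy
      obtain ⟨i, m, h, hm, hfh, rfl, hfg, hlen⟩ := decomp _ ha1
      have hi : i ≠ 0 := allP_head_ne hPa hfg
      have hPh : AllP h := allP_sub hm hfh hPa
      rw [mul_assoc]
      exact allP_smul hi m (ih h y (by omega) hPh hPy)

/-- prefix decomposition of a positively-headed element -/
lemma prefix_decomp : ∀ n : ℕ, ∀ g : FF, len g ≤ n →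
    ∀ j, j ≠ 0 → fI g = some j →
    ∃ c h₀, AllP c ∧ c ≠ 1 ∧ (h₀ = 1 ∨ fI h₀ = some 0) ∧ g = c * h₀ ∧
      fI c = some j ∧ len h₀ < len g := by
  intro n
  induction n with
  | zero =>
      intro g hg j hj hfg
      rw [len_zero_eq_one (Nat.le_zero.mp hg), fI_one] at hfg
      simp at hfg
  | succ n ih =>
      intro g hg j hj hfg
      by_cases hg1 : g = 1
      · rw [hg1, fI_one] at hfg; simp at hfg
      obtain ⟨i, m, h, hm, hfh, rfl, hfg', hlen⟩ := decomp _ hg1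
      have hij : i = j := by rw [hfg'] at hfg; simpa using hfg
      subst hij
      by_cases hh1 : h = 1
      · subst hh1
        exact ⟨xof i m, 1, allP_xof hj m, fun hc => hg1 (by rw [hc, one_mul]),
          Or.inl rfl, rfl, by rwa [mul_one] at hfg', by
            have hl2 := hlen
            rw [len_one] at hl2
            omega⟩
      obtain ⟨i', m', h', hm', hfh', hde', hfg'', hlen'⟩ := decomp _ hh1
      by_cases hi'0 : i' = 0
      · subst hi'0
        exact ⟨xof i m, h, allP_xof hj m, fun hc => by
            rw [hc] at hfg'; rw [show fI ((1 : FF) * h) = fI h from by rw [one_mul]] at hfg'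
            exact hfh (by rw [hfg']),
          Or.inr hfg'', rfl, fI_xof hm, by omega⟩
      · obtain ⟨c', h₀, hPc', hc'1, hh₀, hde₀, hfc', hlen₀⟩ :=
          ih h (by omega) i' hi'0 hfg''
        refine ⟨xof i m * c', h₀, ?_, ?_, hh₀, ?_, ?_, by omega⟩
        · exact allP_smul hj m hPc'
        · intro hc
          have : fI ((xof i m * c' : FF)) = some i :=
            fI_of_mul _ _ hm (by rw [hfc']; intro hcc; exact hfh (by rw [hfg'']; exact hcc))
          rw [hc, fI_one] at this; simp at this
        · rw [mul_assoc, ← hde₀]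
        · exact fI_of_mul _ _ hm (by rw [hfc']; intro hcc; exact hfh (by rw [hfg'']; exact hcc))

lemma fI_allP_mul : ∀ n : ℕ, ∀ c : FF, len c ≤ n → AllP c → c ≠ 1 →
    ∀ h₀ : FF, (h₀ = 1 ∨ fI h₀ = some 0) → fI (c * h₀) = fI c := by
  intro n
  induction n with
  | zero =>
      intro c hc hPc hc1
      exact absurd (len_zero_eq_one (Nat.le_zero.mp hc)) hc1
  | succ n ih =>
      intro c hc hPc hc1 h₀ hh₀
      obtain ⟨i, m, h, hm, hfh, rfl, hfg, hlen⟩ := decomp _ hc1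
      have hi : i ≠ 0 := allP_head_ne hPc hfg
      have hPh : AllP h := allP_sub hm hfh hPc
      by_cases hh1 : h = 1
      · subst hh1
        rcases hh₀ with h1 | h1
        · rw [h1, mul_one]
        · rw [mul_one] at hfg ⊢
          rw [fI_of_mul _ _ hm (by rw [h1]; simp [hi, eq_comm]), fI_xof hm]
      · have hrec : fI (h * h₀) = fI h := ih h (by omega) hPh hh1 h₀ hh₀
        rw [mul_assoc, hfg, fI_of_mul _ _ hm (by rw [hrec]; exact hfh)]

/-! ### Good automorphisms -/

def Good (e : MulAut FF) : Prop :=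
  (∀ m, e (xof 0 m) = xof 0 m) ∧ (∀ g, AllP g ↔ AllP (e g))

lemma allP_map (e : MulAut FF) (he : ∀ k m, k ≠ 0 → AllP (e (xof k m))) :
    ∀ n : ℕ, ∀ g : FF, len g ≤ n → AllP g → AllP (e g) := by
  intro n
  induction n with
  | zero =>
      intro g hg _
      rw [len_zero_eq_one (Nat.le_zero.mp hg), map_one]
      exact allP_one
  | succ n ih =>
      intro g hg hP
      by_cases hg1 : g = 1
      · rw [hg1, map_one]; exact allP_one
      obtain ⟨i, m, h, hm, hfh, rfl, hfg, hlen⟩ := decomp _ hg1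
      have hi : i ≠ 0 := allP_head_ne hP hfg
      have hPh : AllP h := allP_sub hm hfh hP
      rw [map_mul]
      exact allP_mul (len (e (xof i m))) _ _ le_rfl (he i m hi) (ih h (by omega) hPh)

/-- class preservation under good automorphisms -/
lemma good_cl (e : MulAut FF) (he0 : ∀ m, e (xof 0 m) = xof 0 m)
    (heP : ∀ g, AllP g → AllP (e g)) :
    ∀ n : ℕ, ∀ g : FF, len g ≤ n →
      ((fI g = some 0 → fI (e g) = some 0) ∧
       (∀ j, j ≠ 0 → fI g = some j → ∃ j', j' ≠ 0 ∧ fI (e g) = some j')) := by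
  intro n
  induction n with
  | zero =>
      intro g hg
      rw [len_zero_eq_one (Nat.le_zero.mp hg)]
      constructor
      · intro h0; rw [fI_one] at h0; simp at h0
      · intro j hj h0; rw [fI_one] at h0; simp at h0
  | succ n ih =>
      intro g hg
      constructor
      · intro h0
        have hg1 : g ≠ 1 := fun hc => by rw [hc, fI_one] at h0; simp at h0
        obtain ⟨i, m, h, hm, hfh, rfl, hfg, hlen⟩ := decomp _ hg1
        have hi : i = 0 := by rw [hfg] at h0; simpa using h0
        subst hi
        rw [map_mul, he0]
        apply fI_of_mul _ _ hm
        by_cases hh1 : h = 1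
        · rw [hh1, map_one, fI_one]; simp
        · obtain ⟨i', m', h', hm', hfh', hde', hfg'', hlen'⟩ := decomp _ hh1
          have hi' : i' ≠ 0 := fun hc => hfh (by rw [hfg'', hc])
          obtain ⟨j', hj', hfj'⟩ := (ih h (by omega)).2 i' hi' hfg''
          rw [hfj']
          simp [hj']
      · intro j hj h0
        obtain ⟨c, h₀, hPc, hc1, hh₀, hge, hfc, hlen₀⟩ :=
          prefix_decomp (len g) g le_rfl j hj h0
        have hec1 : e c ≠ 1 := fun hc => hc1 (by
          have := e.injective (a₁ := c) (a₂ := 1) (by rw [hc, map_one])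
          exact this)
        have hePc : AllP (e c) := heP c hPc
        have heh₀ : e h₀ = 1 ∨ fI (e h₀) = some 0 := by
          rcases hh₀ with h1 | h1
          · left; rw [h1, map_one]
          · right
            have hlh : len h₀ ≤ n := by omega
            exact (ih h₀ hlh).1 h1
        rw [hge, map_mul]
        rw [fI_allP_mul (len (e c)) _ le_rfl hePc hec1 _ heh₀]
        obtain ⟨k, mk, hk, hmk, hfhk, hec, hfk, hlk⟩ := decomp _ hec1
        exact ⟨k, allP_head_ne hePc hfk, hfk⟩

lemma good_artin (i : ℕ) : Good (Artin (i+1)) := by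
  have hvals : ∀ k m, k ≠ 0 → AllP ((Artin (i+1)) (xof k m)) := by
    intro k m hk
    rw [Artin_xof]
    split_ifs with h1 h2
    · rw [x_eq, xof_inv]
      exact allP_mul (len (xof (i+1) gn * xof (i+1+1) m)) _ _ le_rfl
        (allP_mul (len (xof (i+1) gn)) _ _ le_rfl
          (allP_xof (by omega) _) (allP_xof (by omega) _)) (allP_xof (by omega) _)
    · exact allP_xof (by omega) _
    · exact allP_xof hk _
  have hvals' : ∀ k m, k ≠ 0 → AllP ((Artin (i+1))⁻¹ (xof k m)) := by
    intro k m hk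
    show AllP (Bend (i+1) (xof k m))
    rw [Bend_xof]
    split_ifs with h1 h2
    · exact allP_xof (by omega) _
    · rw [x_eq, xof_inv]
      exact allP_mul (len (xof (i+1+1) gn⁻¹ * xof (i+1) m)) _ _ le_rfl
        (allP_mul (len (xof (i+1+1) gn⁻¹)) _ _ le_rfl
          (allP_xof (by omega) _) (allP_xof (by omega) _)) (allP_xof (by omega) _)
    · exact allP_xof hk _
  refine ⟨?_, ?_⟩
  · intro m
    rw [Artin_xof]
    simp
  · intro g
    constructor
    · exact fun h => allP_map _ hvals (len g) g le_rfl h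
    · intro h
      have := allP_map ((Artin (i+1))⁻¹) hvals' (len ((Artin (i+1)) g)) _ le_rfl h
      simpa using this

def GoodSub : Subgroup (MulAut FF) where
  carrier := {e | Good e}
  one_mem' := ⟨fun m => rfl, fun g => Iff.rfl⟩
  mul_mem' := by
    rintro e e' ⟨h1, h2⟩ ⟨h1', h2'⟩
    constructor
    · intro m
      show e (e' (xof 0 m)) = xof 0 m
      rw [h1' m, h1 m]
    · intro g
      show AllP g ↔ AllP (e (e' g))
      rw [h2' g, h2 (e' g)]
  inv_mem' := by
    rintro e ⟨h1, h2⟩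
    constructor
    · intro m
      apply e.injective
      simp [h1 m]
    · intro g
      have := (h2 (e⁻¹ g)).symm
      simpa using this

lemma good_rho_sh (b : BG) : Good (ρ (sh b)) := by
  have : b ∈ GoodSub.comap (ρ.comp sh) := by
    apply PresentedGroup.generated_by
    intro j
    simp only [Subgroup.mem_comap, MonoidHom.comp_apply]
    rw [show (PresentedGroup.of j : BG) = σ j from rfl, sh_σ, ρ_σ]
    exact good_artin j
  exact this

/-! ### Positivity -/

def PosE (g : FF) : Prop := ∃ r j, j ≠ 0 ∧ fI r = some j ∧ g = x 0 * r

lemma posE_fI {g : FF} (hg : PosE g) : fI g = some 0 := by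
  obtain ⟨r, j, hj, hfr, rfl⟩ := hg
  rw [x_eq]
  exact fI_of_mul _ _ gn_ne_one (by rw [hfr]; simp [hj])

lemma posE_sigma {g : FF} (hg : fI g = some 0) : PosE (Artin 0 g) := by
  obtain ⟨r, hr1, hr2⟩ := (sigma_main (len g) g le_rfl).1 hg
  exact ⟨r, 1, one_ne_zero, hr1, hr2⟩

lemma posE_good {e : MulAut FF} (he : Good e) {g : FF} (hg : PosE g) : PosE (e g) := by
  obtain ⟨r, j, hj, hfr, rfl⟩ := hg
  obtain ⟨j', hj', hfr'⟩ := (good_cl e he.1 (fun g h => (he.2 g).mp h) (len r) r le_rfl).2 j hj hfr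
  refine ⟨e r, j', hj', hfr', ?_⟩
  rw [map_mul, show e (x 0) = x 0 from he.1 gn]

lemma fI_x0_inv : fI ((x 0)⁻¹) = some 0 := by
  rw [x_eq, xof_inv]
  exact fI_xof (inv_ne_one.mpr gn_ne_one)

lemma not_posE_x0_inv : ¬ PosE ((x 0)⁻¹) := by
  rintro ⟨r, j, hj, hfr, hre⟩
  have hr : r = (x 0)⁻¹ * (x 0)⁻¹ := by
    have h0 : (x 0) * r = (x 0)⁻¹ := hre.symm
    calc r = (x 0)⁻¹ * (x 0 * r) := by group
    _ = (x 0)⁻¹ * (x 0)⁻¹ := by rw [h0]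
  have h2 : r = xof 0 (gn⁻¹ * gn⁻¹) := by
    rw [hr, x_eq, xof_inv, xof_mul_cancel2]
  have hne : (gn⁻¹ * gn⁻¹ : FreeGroup Unit) ≠ 1 := by
    intro hc
    have h3 : ((gn * gn)⁻¹ : FreeGroup Unit) = 1 := by rw [mul_inv_rev]; exact hc
    have h4 : (gn * gn : FreeGroup Unit) = 1 := by rwa [inv_eq_one] at h3
    have h5 : FreeGroup.norm (gn * gn) = 2 := by
      have : (gn * gn : FreeGroup Unit) = FreeGroup.of () ^ 2 := by rw [sq]; rfl
      rw [this, FreeGroup.norm_of_pow]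
    rw [h4] at h5
    simp [FreeGroup.norm_one] at h5
  rw [h2, fI_xof hne] at hfr
  exact hj (by simpa using hfr.symm)

/-- σ-positive elements of the braid group -/
inductive SPos : BG → Prop
  | base (a b : BG) : SPos (sh a * (σ 0 * sh b))
  | step (a b w : BG) : SPos w → SPos (sh a * (σ 0 * (sh b * w)))

lemma rho_mul_apply (a b : BG) (g : FF) : ρ (a * b) g = ρ a (ρ b g) := by
  rw [map_mul]; rfl

lemma good_fix_x0_inv {e : MulAut FF} (he : Good e) : e ((x 0)⁻¹) = (x 0)⁻¹ := by
  rw [x_eq, xof_inv, he.1]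

lemma spos_posE {w : BG} (h : SPos w) : PosE (ρ w ((x 0)⁻¹)) := by
  induction h with
  | base a b =>
      rw [rho_mul_apply, rho_mul_apply, ρ_σ]
      rw [good_fix_x0_inv (good_rho_sh b)]
      exact posE_good (good_rho_sh a) (posE_sigma fI_x0_inv)
  | step a b w hw ih =>
      rw [rho_mul_apply, rho_mul_apply, rho_mul_apply, ρ_σ]
      exact posE_good (good_rho_sh a)
        (posE_sigma (posE_fI (posE_good (good_rho_sh b) ih)))

lemma spos_ne_one {w : BG} (h : SPos w) : w ≠ 1 := by
  intro hc
  have := spos_posE h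
  rw [hc, map_one] at this
  exact not_posE_x0_inv (by simpa using this)

/-! ### the evaluation of terms in BG -/

def phi : FreeMagma Unit → BG
  | .of _ => 1
  | .mul a b => op (phi a) (phi b)

lemma phi_mul (a b : FreeMagma Unit) : phi (a * b) = op (phi a) (phi b) := rfl

lemma phi_ld {a b : FreeMagma Unit} (h : LDRel Unit a b) : phi a = phi b := by
  induction h with
  | ld a b c =>
      show op (phi a) (op (phi b) (phi c)) = op (op (phi a) (phi b)) (op (phi a) (phi c))
      exact ld_law _ _ _
  | refl a => rfl
  | symm _ ih => exact ih.symm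
  | trans _ _ ih1 ih2 => exact ih1.trans ih2
  | mul _ _ ih1 ih2 =>
      show op _ _ = op _ _
      rw [ih1, ih2]

lemma phi_leftIter : ∀ l : List (FreeMagma Unit), l ≠ [] → ∀ t : FreeMagma Unit,
    ∃ w : BG, SPos w ∧ phi (leftIter t l) = phi t * w := by
  intro l
  induction l with
  | nil => simp
  | cons u l' ih =>
      intro _ t
      by_cases hl' : l' = []
      · subst hl'
        refine ⟨sh (phi u) * (σ 0 * sh ((phi t)⁻¹)), SPos.base _ _, ?_⟩
        show op (phi t) (phi u) = _
        rw [op, map_inv]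
        group
      · obtain ⟨w, hw, he⟩ := ih hl' (t * u)
        refine ⟨sh (phi u) * (σ 0 * (sh ((phi t)⁻¹) * w)), SPos.step _ _ _ hw, ?_⟩
        show phi (leftIter (t * u) l') = _
        rw [he, phi_mul, op, map_inv]
        group

lemma key (t : FreeMagma Unit) (l : List (FreeMagma Unit)) (hl : l ≠ []) :
    ¬ LDRel Unit (leftIter t l) t := by
  intro h
  obtain ⟨w, hw, he⟩ := phi_leftIter l hl t
  rw [phi_ld h] at he
  exact spos_ne_one hw (by
    have := he.symm
    rwa [mul_eq_left] at this)

end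
end Larue


def mkLD (t : FreeMagma Unit) : FreeLD Unit := Quotient.mk (LDSetoid Unit) t

lemma mkLD_mul (t u : FreeMagma Unit) : mkLD t * mkLD u = mkLD (t * u) := rfl

lemma list_lift (l : List (FreeLD Unit)) :
    ∃ l' : List (FreeMagma Unit), l'.map mkLD = l := by
  induction l with
  | nil => exact ⟨[], rfl⟩
  | cons a l ih =>
      obtain ⟨l', hl'⟩ := ih
      obtain ⟨t, ht⟩ := Quotient.exists_rep a
      exact ⟨t :: l', by simp [mkLD, hl', ht]⟩

lemma leftIter_mk (t : FreeMagma Unit) (l' : List (FreeMagma Unit)) :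
    leftIter (mkLD t) (l'.map mkLD) = mkLD (leftIter t l') := by
  induction l' generalizing t with
  | nil => rfl
  | cons u l ih =>
      show leftIter (mkLD t * mkLD u) (l.map mkLD) = _
      rw [mkLD_mul, ih]
      rfl


theorem freeLD_one_acyclic :
    (∀ x : FreeLD Unit, ¬ ltL x x) ∧
      ∀ (t : FreeMagma Unit) (l : List (FreeMagma Unit)), l ≠ [] →
        ¬ LDRel Unit (leftIter t l) t := by
  constructor
  · rintro x ⟨l, hl, he⟩
    obtain ⟨t, rfl⟩ := Quotient.exists_rep x
    obtain ⟨l', rfl⟩ := list_lift l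
    rw [show (Quotient.mk (LDSetoid Unit) t : FreeLD Unit) = mkLD t from rfl,
      leftIter_mk] at he
    have hLD : LDRel Unit (leftIter t l') t :=
      LDRel.symm (Quotient.exact (he : mkLD t = mkLD (leftIter t l')))
    have hl' : l' ≠ [] := fun hc => hl (by rw [hc]; rfl)
    exact Larue.key t l' hl' hLD
  · exact Larue.key
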